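/- Let s > 0, a > 0, D > 0, r > a, R₁ > a, R₂ > a, write P̄(s,x) = (a/(s·x))·exp(−(x−a)·√(s/D)), and set w₁ = s·P̄(s,R₁), w₂ = s·P̄(s,R₂). Suppose real numbers P₁, P₂, P₃, P₄ satisfy the UCA-4 renewal system P̄(s,r) − Pᵢ = w₁·(P_{i−1} + P_{i+1}) + w₂·P_{i+2} for every i (indices taken mod 4), and that the associated 4×4 matrix (with diagonal entries 1, entries w₁ between circularly adjacent indices and w₂ between opposite indices) is invertible. Then Pᵢ = P̄(s,r)/(1 + 2·w₁ + w₂) for every i. -/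
import Mathlib


open Matrix

/-- Laplace transform of the single-FAR hitting probability:
`P̄(s,x) = (a/(s·x))·exp(−(x−a)·√(s/D))`. -/
noncomputable def Pbar (a D s x : ℝ) : ℝ :=
  a / (s * x) * Real.exp (-(x - a) * Real.sqrt (s / D))

/-- Auxiliary: the row action of the UCA-4 matrix on any vector. -/
lemma uca4_mulVec (w₁ w₂ : ℝ) (A : Matrix (ZMod 4) (ZMod 4) ℝ)
    (hA : A = Matrix.of fun i j =>
      if i = j then 1 else if j = i + 1 ∨ j = i - 1 then w₁ else w₂)
    (Q : ZMod 4 → ℝ) (i : ZMod 4) :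
    A.mulVec Q i = Q i + w₁ * (Q (i + 1) + Q (i - 1)) + w₂ * Q (i + 2) := by
  subst hA
  simp only [Matrix.mulVec, dotProduct, Matrix.of_apply]
  rw [show (Finset.univ : Finset (ZMod 4)) = {0, 1, 2, 3} by decide]
  have h4 : i = 0 ∨ i = 1 ∨ i = 2 ∨ i = 3 := by revert i; decide
  rcases h4 with h | h | h | h <;> subst h <;>
    rw [Finset.sum_insert (by decide), Finset.sum_insert (by decide),
      Finset.sum_insert (by decide), Finset.sum_singleton] <;>
    norm_num [show ((-1 : ZMod 4)) = 3 by decide, show ((4 : ZMod 4)) = 0 by decide,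
      show ((5 : ZMod 4)) = 1 by decide, show ((0 : ZMod 4) - 1) = 3 by decide,
      show ((0 : ZMod 4) + 2) = 2 by decide, show ((1 : ZMod 4) - 1) = 0 by decide,
      show ((1 : ZMod 4) + 2) = 3 by decide, show ((2 : ZMod 4) + 1) = 3 by decide,
      show ((2 : ZMod 4) - 1) = 1 by decide, show ((2 : ZMod 4) + 2) = 0 by decide,
      show ((3 : ZMod 4) + 1) = 0 by decide, show ((3 : ZMod 4) - 1) = 2 by decide,
      show ((3 : ZMod 4) + 2) = 1 by decide] <;>
    simp (config := { decide := true }) only [] <;>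
    simp only [if_true, if_false, show ((-1 : ZMod 4)) = 3 from by decide,
      show ((4 : ZMod 4)) = 0 from by decide, show ((5 : ZMod 4)) = 1 from by decide] <;>
    ring

/-- Theorem 4 for `N = 4` (equation l4rx): in a UCA of 4 FARs, the Laplace-domain
renewal system forces `Pᵢ = P̄(s,r)/(1 + 2w₁ + w₂)` for every `i`. -/
theorem stmt8 (s a D r R₁ R₂ : ℝ) (hs : 0 < s) (ha : 0 < a) (hD : 0 < D)
    (hr : a < r) (hR₁ : a < R₁) (hR₂ : a < R₂)
    (w₁ w₂ : ℝ) (hw₁ : w₁ = s * Pbar a D s R₁) (hw₂ : w₂ = s * Pbar a D s R₂)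
    (P : ZMod 4 → ℝ)
    (hP : ∀ i : ZMod 4, Pbar a D s r - P i = w₁ * (P (i - 1) + P (i + 1)) + w₂ * P (i + 2))
    (A : Matrix (ZMod 4) (ZMod 4) ℝ)
    (hA : A = Matrix.of fun i j =>
      if i = j then 1 else if j = i + 1 ∨ j = i - 1 then w₁ else w₂)
    (hInv : IsUnit A.det) :
    ∀ i : ZMod 4, P i = Pbar a D s r / (1 + 2 * w₁ + w₂) := by
  set c := Pbar a D s r with hc
  set k := 1 + 2 * w₁ + w₂ with hk
  -- A is injective via its inverse
  have hinv : A⁻¹ * A = 1 := Matrix.nonsing_inv_mul A hInv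
  have hinj : Function.Injective A.mulVec := by
    intro x y hxy
    have := congrArg (A⁻¹.mulVec) hxy
    rwa [Matrix.mulVec_mulVec, Matrix.mulVec_mulVec, hinv, Matrix.one_mulVec,
      Matrix.one_mulVec] at this
  -- k ≠ 0
  have hk0 : k ≠ 0 := by
    intro h0
    have h1 : A.mulVec (fun _ => (1 : ℝ)) = A.mulVec (fun _ => (0 : ℝ)) := by
      funext i
      rw [uca4_mulVec w₁ w₂ A hA, uca4_mulVec w₁ w₂ A hA]
      have hkk : (1:ℝ) + 2 * w₁ + w₂ = 0 := by rw [hk] at h0; linarith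
      linarith
    have := congrFun (hinj h1) 0
    norm_num at this
  -- A *ᵥ P = A *ᵥ (const c/k)
  have hAP : A.mulVec P = A.mulVec (fun _ => c / k) := by
    funext i
    rw [uca4_mulVec w₁ w₂ A hA, uca4_mulVec w₁ w₂ A hA]
    have h := hP i
    have : c / k * k = c := div_mul_cancel₀ c hk0
    have hk' : c / k + w₁ * (c / k + c / k) + w₂ * (c / k) = c / k * k := by rw [hk]; ring
    rw [hk', this]
    linarith [h]
  have := hinj hAP
  intro i
  exact congrFun this i
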